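/- The non-parametric scale-convolution [f₁ ⋆_H f₂](s, t) = L_{s⁻¹}[ L_s[f₁] ⋆ f₂ ](t) is equivariant under translation of its first argument: for all t̂ ∈ ℝ, [T_t̂[f₁] ⋆_H f₂](s, t) = [f₁ ⋆_H f₂](s, t - t̂). -/

import Mathlib

open MeasureTheory

noncomputable def conv (f g : ℝ → ℝ) : ℝ → ℝ := fun t => ∫ t', f t' * g (t - t')

noncomputable def Lscale (s : ℝ) (f : ℝ → ℝ) : ℝ → ℝ := fun t => f (s⁻¹ * t)

noncomputable def Ttrans (τ : ℝ) (f : ℝ → ℝ) : ℝ → ℝ := fun t => f (t - τ)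

noncomputable def scaleConv (f₁ f₂ : ℝ → ℝ) (s t : ℝ) : ℝ :=
  Lscale s⁻¹ (conv (Lscale s f₁) f₂) t

/-- Equivariance under translation of the first argument:
`[T_tHat[f₁] ⋆_H f₂](s, t) = [f₁ ⋆_H f₂](s, t - tHat)`. -/
theorem stmt6 (f₁ f₂ : ℝ → ℝ) (hf₁ : Integrable f₁) (hf₂ : Integrable f₂)
    (tHat : ℝ) (s : ℝ) (hs : 0 < s) (t : ℝ) :
    scaleConv (Ttrans tHat f₁) f₂ s t = scaleConv f₁ f₂ s (t - tHat) := by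
  simp only [scaleConv, Lscale, conv, Ttrans]
  rw [← integral_add_right_eq_self
    (fun t' => f₁ (s⁻¹ * t' - tHat) * f₂ ((s⁻¹)⁻¹ * t - t')) (s * tHat)]
  congr 1
  ext t'
  have hs' : s ≠ 0 := hs.ne'
  congr 1
  · congr 1; field_simp; ring
  · congr 1; field_simp; ring
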